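/- Let S ⊆ ℤ² be a finite set such that S \ S̄_1 is nonempty. Then S \ S̄_1 is a finite union of pseudoregular digital manifolds; in particular, every point of S \ S̄_1 belongs to a surface cell contained in S \ S̄_1, and each class of the equivalence relation generated by point-connectedness of surface cells of S \ S̄_1 is a pseudoregular digital manifold. -/

import Mathlib

/-- The Chebyshev (`l∞`) distance between two grid points of `ℤ²`. -/
def chebDist (k l : ℤ × ℤ) : ℕ := max (k.1 - l.1).natAbs (k.2 - l.2).natAbs

/-- The `l∞` boundary distance of `k` with respect to a set `P ⊆ ℤ²`. -/
noncomputable def bdist (P : Set (ℤ × ℤ)) (k : ℤ × ℤ) : ℕ :=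
  sInf {n | ∃ l ∉ P, chebDist k l = n}

/-- The `i`-th distance layer `S_i = {k ∈ P : d(k;P) = i}`. -/
def layer (P : Set (ℤ × ℤ)) (i : ℕ) : Set (ℤ × ℤ) :=
  {k ∈ P | bdist P k = i}

/-- `S̄_i`: the points of `S_i` all of whose 8 neighbours `l` satisfy `d(l;P) ≤ i`. -/
def layerBar (P : Set (ℤ × ℤ)) (i : ℕ) : Set (ℤ × ℤ) :=
  {k ∈ layer P i | ∀ l, chebDist k l = 1 → bdist P l ≤ i}

/-- The surface cell with lower-left corner `k`: the four points
`{k, k+(1,0), k+(0,1), k+(1,1)}`. -/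
def surfCell (k : ℤ × ℤ) : Set (ℤ × ℤ) :=
  {k, k + (1, 0), k + (0, 1), k + (1, 1)}

/-- `c` is a surface cell of the set `S`. -/
def IsSurfCellOf (S c : Set (ℤ × ℤ)) : Prop :=
  (∃ k, c = surfCell k) ∧ c ⊆ S

/-- Two surface cells of `S` are point-connected if they share at least one point. -/
def cellAdj (S : Set (ℤ × ℤ)) (c c' : Set (ℤ × ℤ)) : Prop :=
  IsSurfCellOf S c ∧ IsSurfCellOf S c' ∧ (c ∩ c').Nonempty

/-- A finite nonempty `S ⊆ ℤ²` is a pseudoregular digital manifold if every point of `S`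
belongs to a surface cell of `S` and every two surface cells of `S` are joined by a finite
point-connected chain of surface cells of `S`. -/
def IsPseudoregular (S : Set (ℤ × ℤ)) : Prop :=
  S.Nonempty ∧ (∀ k ∈ S, ∃ c, IsSurfCellOf S c ∧ k ∈ c) ∧
    ∀ c c', IsSurfCellOf S c → IsSurfCellOf S c' →
      Relation.ReflTransGen (cellAdj S) c c'


section Aux

lemma chebDist_comm (k l : ℤ × ℤ) : chebDist k l = chebDist l k := by
  simp only [chebDist]
  omega

lemma chebDist_triangle (a b c : ℤ × ℤ) :
    chebDist a c ≤ chebDist a b + chebDist b c := by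
  simp only [chebDist]
  omega

lemma chebDist_self (a : ℤ × ℤ) : chebDist a a = 0 := by
  simp [chebDist]

lemma chebDist_eq_zero {a b : ℤ × ℤ} : chebDist a b = 0 ↔ a = b := by
  simp only [chebDist, Prod.ext_iff]
  omega

lemma bdist_set_nonempty {S : Set (ℤ × ℤ)} (hS : S.Finite) (k : ℤ × ℤ) :
    {n | ∃ l ∉ S, chebDist k l = n}.Nonempty := by
  obtain ⟨l, hl⟩ := hS.infinite_compl.nonempty
  exact ⟨chebDist k l, l, hl, rfl⟩

lemma bdist_le {S : Set (ℤ × ℤ)} (k : ℤ × ℤ) {l : ℤ × ℤ} (hl : l ∉ S) :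
    bdist S k ≤ chebDist k l :=
  Nat.sInf_le ⟨l, hl, rfl⟩

lemma exists_of_bdist {S : Set (ℤ × ℤ)} (hS : S.Finite) (k : ℤ × ℤ) :
    ∃ l ∉ S, chebDist k l = bdist S k :=
  Nat.sInf_mem (bdist_set_nonempty hS k)

lemma mem_of_bdist_pos {S : Set (ℤ × ℤ)} {k : ℤ × ℤ} (h : 1 ≤ bdist S k) : k ∈ S := by
  by_contra hk
  have h2 := bdist_le k hk
  rw [chebDist_self] at h2
  omega

lemma bdist_lipschitz {S : Set (ℤ × ℤ)} (hS : S.Finite) (k m : ℤ × ℤ) :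
    bdist S k ≤ chebDist k m + bdist S m := by
  obtain ⟨l, hl, he⟩ := exists_of_bdist hS m
  calc bdist S k ≤ chebDist k l := bdist_le k hl
    _ ≤ chebDist k m + chebDist m l := chebDist_triangle _ _ _
    _ = chebDist k m + bdist S m := by rw [he]

/-- Every point within distance 1 of a "deep" point (bdist ≥ 2) lies in `S \ S̄₁`. -/
lemma mem_T_of_near_deep {S : Set (ℤ × ℤ)} (hS : S.Finite) {l m : ℤ × ℤ}
    (hl : 2 ≤ bdist S l) (hm : chebDist m l ≤ 1) : m ∈ S \ layerBar S 1 := by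
  have hlm : chebDist l m ≤ 1 := by rw [chebDist_comm]; exact hm
  have hlip := bdist_lipschitz hS l m
  have h1 : 1 ≤ bdist S m := by omega
  refine ⟨mem_of_bdist_pos h1, ?_⟩
  rintro ⟨⟨hmS, hb1⟩, hnb⟩
  rcases eq_or_ne m l with rfl | hne
  · omega
  · have hz : chebDist m l ≠ 0 := fun h => hne (chebDist_eq_zero.mp h)
    have h1' : chebDist m l = 1 := by omega
    have := hnb l h1'
    omega

def cellCorner (k l : ℤ × ℤ) : ℤ × ℤ :=
  ((if k.1 ≤ l.1 then l.1 - 1 else l.1), (if k.2 ≤ l.2 then l.2 - 1 else l.2))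

lemma mem_surfCell_iff {m c : ℤ × ℤ} :
    m ∈ surfCell c ↔ (m.1 = c.1 ∨ m.1 = c.1 + 1) ∧ (m.2 = c.2 ∨ m.2 = c.2 + 1) := by
  simp only [surfCell, Set.mem_insert_iff, Set.mem_singleton_iff, Prod.ext_iff,
    Prod.fst_add, Prod.snd_add]
  constructor
  · rintro (⟨h1, h2⟩ | ⟨h1, h2⟩ | ⟨h1, h2⟩ | ⟨h1, h2⟩) <;> simp_all <;> omega
  · rintro ⟨h1 | h1, h2 | h2⟩ <;> simp_all

lemma corner_mem (c : ℤ × ℤ) : c ∈ surfCell c := by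
  rw [mem_surfCell_iff]; exact ⟨Or.inl rfl, Or.inl rfl⟩

lemma cellCorner_spec {k l : ℤ × ℤ} (h : chebDist k l ≤ 1) :
    k ∈ surfCell (cellCorner k l) ∧
      ∀ m ∈ surfCell (cellCorner k l), chebDist m l ≤ 1 := by
  have h' : (k.1 - l.1).natAbs ≤ 1 ∧ (k.2 - l.2).natAbs ≤ 1 := by
    simp only [chebDist] at h; omega
  constructor
  · rw [mem_surfCell_iff]
    simp only [cellCorner]
    split_ifs <;> omega
  · intro m hm
    rw [mem_surfCell_iff] at hm
    simp only [cellCorner] at hm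
    simp only [chebDist]
    split_ifs at hm <;> omega

/-- Every point of `S \ S̄₁` belongs to a surface cell of `S \ S̄₁`. -/
lemma point_in_cell {S : Set (ℤ × ℤ)} (hS : S.Finite) {k : ℤ × ℤ}
    (hk : k ∈ S \ layerBar S 1) :
    ∃ c, IsSurfCellOf (S \ layerBar S 1) c ∧ k ∈ c := by
  obtain ⟨hkS, hkB⟩ := hk
  have h1 : 1 ≤ bdist S k := by
    by_contra h
    obtain ⟨l, hl, he⟩ := exists_of_bdist hS k
    have hz : chebDist k l = 0 := by omega
    exact hl (chebDist_eq_zero.mp hz ▸ hkS)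
  obtain ⟨l, hkl, hdeep⟩ : ∃ l, chebDist k l ≤ 1 ∧ 2 ≤ bdist S l := by
    rcases le_or_gt 2 (bdist S k) with h2 | h2
    · exact ⟨k, by rw [chebDist_self]; omega, h2⟩
    · have hb : bdist S k = 1 := by omega
      by_contra hc
      push_neg at hc
      refine hkB ⟨⟨hkS, hb⟩, fun l hl => ?_⟩
      have := hc l (le_of_eq hl)
      omega
  obtain ⟨hkc, hcc⟩ := cellCorner_spec hkl
  exact ⟨surfCell (cellCorner k l),
    ⟨⟨_, rfl⟩, fun m hm => mem_T_of_near_deep hS hdeep (hcc m hm)⟩, hkc⟩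

lemma cellAdj_symm {S c c' : Set (ℤ × ℤ)} (h : cellAdj S c c') : cellAdj S c' c := by
  obtain ⟨h1, h2, p, hp1, hp2⟩ := h
  exact ⟨h2, h1, p, hp2, hp1⟩

lemma reach_cell {T c x : Set (ℤ × ℤ)} (hc : IsSurfCellOf T c)
    (h : Relation.ReflTransGen (cellAdj T) c x) : IsSurfCellOf T x := by
  induction h with
  | refl => exact hc
  | tail _ h _ => exact h.2.1

lemma comp_subset {T c : Set (ℤ × ℤ)} (hc : IsSurfCellOf T c) :
    ⋃₀ {c' | Relation.ReflTransGen (cellAdj T) c c'} ⊆ T := by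
  rintro p ⟨x, hx, hpx⟩
  exact (reach_cell hc hx).2 hpx

/-- Each point-connectedness class of surface cells is a pseudoregular manifold. -/
lemma comp_pseudoregular {T c : Set (ℤ × ℤ)} (hc : IsSurfCellOf T c) :
    IsPseudoregular (⋃₀ {c' | Relation.ReflTransGen (cellAdj T) c c'}) := by
  set U := ⋃₀ {c' | Relation.ReflTransGen (cellAdj T) c c'} with hUdef
  have hsub : ∀ x, Relation.ReflTransGen (cellAdj T) c x → x ⊆ U :=
    fun x hx => Set.subset_sUnion_of_mem hx
  have hcell : ∀ x, Relation.ReflTransGen (cellAdj T) c x → IsSurfCellOf U x :=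
    fun x hx => ⟨(reach_cell hc hx).1, hsub x hx⟩
  have hconv : ∀ x, Relation.ReflTransGen (cellAdj T) c x →
      Relation.ReflTransGen (cellAdj U) c x := by
    intro x hx
    induction hx with
    | refl => exact .refl
    | tail hb hadj ih =>
      exact ih.tail ⟨hcell _ hb, hcell _ (hb.tail hadj), hadj.2.2⟩
  have hUT : U ⊆ T := comp_subset hc
  have hreach : ∀ d, IsSurfCellOf U d → Relation.ReflTransGen (cellAdj T) c d := by
    intro d hd
    obtain ⟨kd, hkd⟩ := hd.1
    have hk : kd ∈ U := hd.2 (hkd ▸ corner_mem kd)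
    obtain ⟨e, he, hke⟩ := hk
    exact Relation.ReflTransGen.tail he
      ⟨reach_cell hc he, ⟨⟨kd, hkd⟩, fun m hm => hUT (hd.2 hm)⟩,
        kd, hke, hkd ▸ corner_mem kd⟩
  obtain ⟨kc, hkc⟩ := hc.1
  refine ⟨⟨kc, Set.mem_sUnion.mpr ⟨c, Relation.ReflTransGen.refl, hkc ▸ corner_mem kc⟩⟩,
    ?_, ?_⟩
  · rintro p ⟨x, hx, hpx⟩
    exact ⟨x, hcell x hx, hpx⟩
  · intro d d' hd hd'
    have h1 : Relation.ReflTransGen (cellAdj U) c d := hconv d (hreach d hd)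
    have h2 : Relation.ReflTransGen (cellAdj U) c d' := hconv d' (hreach d' hd')
    have hsymm : Symmetric (Relation.ReflTransGen (cellAdj U)) :=
      by haveI : Std.Symm (cellAdj U) := ⟨fun _ _ h => cellAdj_symm h⟩
         exact fun a b h => (Relation.ReflTransGen.symmetric (r := cellAdj U)).symm a b h
    exact (hsymm h1).trans h2

end Aux

/-- For a finite `S ⊆ ℤ²` with `S \ S̄_1` nonempty, `S \ S̄_1` is a finite
union of pseudoregular digital manifolds; in particular every point of `S \ S̄_1` belongs
to a surface cell contained in `S \ S̄_1`, and each class of the equivalence relation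
generated by point-connectedness of surface cells of `S \ S̄_1` is a pseudoregular
digital manifold. -/
theorem stmt4 (S : Set (ℤ × ℤ)) (hS : S.Finite)
    (hne : (S \ layerBar S 1).Nonempty) :
    (∃ (n : ℕ) (M : Fin n → Set (ℤ × ℤ)),
        (∀ i, IsPseudoregular (M i)) ∧ S \ layerBar S 1 = ⋃ i, M i) ∧
      (∀ k ∈ S \ layerBar S 1, ∃ c, IsSurfCellOf (S \ layerBar S 1) c ∧ k ∈ c) ∧
      (∀ c, IsSurfCellOf (S \ layerBar S 1) c →
        IsPseudoregular
          (⋃₀ {c' | Relation.ReflTransGen (cellAdj (S \ layerBar S 1)) c c'})) := by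
  classical
  set T := S \ layerBar S 1 with hT
  have hTfin : T.Finite := hS.diff
  refine ⟨?_, fun k hk => point_in_cell hS hk, fun c hc => comp_pseudoregular hc⟩
  -- finite union of components
  choose f hf hkf using fun (k : T) => point_in_cell hS k.2
  let n := hTfin.toFinset.card
  let e : hTfin.toFinset ≃ Fin n := hTfin.toFinset.equivFin
  let pt : Fin n → T := fun i =>
    ⟨(e.symm i : ℤ × ℤ), hTfin.mem_toFinset.mp (e.symm i).2⟩
  refine ⟨n, fun i => ⋃₀ {c' | Relation.ReflTransGen (cellAdj T) (f (pt i)) c'},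
    fun i => comp_pseudoregular (hf (pt i)), ?_⟩
  apply Set.Subset.antisymm
  · intro k hk
    refine Set.mem_iUnion.mpr ⟨e ⟨k, hTfin.mem_toFinset.mpr hk⟩, ?_⟩
    refine Set.mem_sUnion.mpr ⟨f (pt (e ⟨k, hTfin.mem_toFinset.mpr hk⟩)),
      Relation.ReflTransGen.refl, ?_⟩
    have : pt (e ⟨k, hTfin.mem_toFinset.mpr hk⟩) = ⟨k, hk⟩ := by
      simp only [pt, Equiv.symm_apply_apply]
    rw [this]
    exact hkf ⟨k, hk⟩
  · intro k hk
    obtain ⟨i, hi⟩ := Set.mem_iUnion.mp hk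
    exact comp_subset (hf (pt i)) hi
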